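/- Let b_n be a sequence of nonzero complex numbers with positive real part such that M := sup_n 1/(Re(b_{2n−1}) Re(1/b_{2n})) < ∞, and let C > 0 with C² ≥ M/4. Then for every n and every w with |w − C| ≤ C, the even modified convergent f_{2n}(w) = 1/(b_1 + 1/(b_2 + ··· + 1/(b_{2n} + w)···)) satisfies |f_{2n}(w) − C| ≤ C. -/

import Mathlib

/-- The finite continued fraction associated with the denominators `b`:
`F_0 = w`, `F_{k+1} = 1/(b (N - k) + F_k)`, so that
`F_N = 1/(b 1 + 1/(b 2 + ⋯ + 1/(b N + w)⋯))`. -/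
noncomputable def contFrac (N : ℕ) (b : ℕ → ℂ) (w : ℂ) : ℕ → ℂ :=
  Nat.rec w (fun k F => 1 / (b (N - k) + F))

lemma contFrac_succ (N : ℕ) (b : ℕ → ℂ) (w : ℂ) (k : ℕ) :
    contFrac N b w (k + 1) = 1 / (b (N - k) + contFrac N b w k) := rfl

/-- The key real inequality. -/
lemma key_re (C p q x y a : ℝ) (hC : 0 < C) (hp : 0 < p)
    (hdisk : x ^ 2 + y ^ 2 ≤ 2 * C * x) (ha : p ^ 2 + q ^ 2 ≤ a * (4 * C ^ 2 * p)) :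
    1 / (2 * C) ≤ a + (p + x) / ((p + x) ^ 2 + (q + y) ^ 2) := by
  have hx : 0 ≤ x := by nlinarith [sq_nonneg x, sq_nonneg y]
  have hpx : 0 < p + x := by linarith
  have hD : 0 < (p + x) ^ 2 + (q + y) ^ 2 := by positivity
  have hD0 : 0 < p ^ 2 + q ^ 2 + 2 * C * p := by positivity
  have hs : 0 ≤ 2 * C * x - x ^ 2 - y ^ 2 := by linarith
  have hx2C : x ≤ 2 * C := by nlinarith [sq_nonneg y]
  -- Step 1 : p / (p^2+q^2+2Cp) ≤ (p+x) / ((p+x)^2+(q+y)^2)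
  have step1 : p / (p ^ 2 + q ^ 2 + 2 * C * p) ≤ (p + x) / ((p + x) ^ 2 + (q + y) ^ 2) := by
    rw [div_le_div_iff₀ hD0 hD]
    have hA : 0 ≤ p ^ 2 * (2 * C - x) + q ^ 2 * x := by nlinarith [sq_nonneg q]
    have hAsq : 4 * p ^ 2 * q ^ 2 * y ^ 2 ≤ (p ^ 2 * (2 * C - x) + q ^ 2 * x) ^ 2 := by
      nlinarith [sq_nonneg (p ^ 2 * (2 * C - x) - q ^ 2 * x),
        mul_nonneg (mul_nonneg (sq_nonneg (2 * p)) (sq_nonneg q)) hs]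
    have hkey : 2 * p * q * y ≤ p ^ 2 * (2 * C - x) + q ^ 2 * x := by
      nlinarith [sq_nonneg (p ^ 2 * (2 * C - x) + q ^ 2 * x - 2 * p * q * y), hA, hAsq]
    nlinarith [mul_nonneg hp.le hs, hkey]
  -- Step 2 : 1/(2C) ≤ a + p / (p^2+q^2+2Cp)
  have step2 : 1 / (2 * C) ≤ a + p / (p ^ 2 + q ^ 2 + 2 * C * p) := by
    have h2C : (0 : ℝ) < 2 * C := by linarith
    have key : p ^ 2 + q ^ 2 + 2 * C * p
        ≤ 2 * C * (a * (p ^ 2 + q ^ 2 + 2 * C * p) + p) := by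
      nlinarith [sq_nonneg (p ^ 2 + q ^ 2), mul_le_mul_of_nonneg_right ha hD0.le,
        mul_pos hC hp]
    have heq : a + p / (p ^ 2 + q ^ 2 + 2 * C * p)
        = (a * (p ^ 2 + q ^ 2 + 2 * C * p) + p) / (p ^ 2 + q ^ 2 + 2 * C * p) := by
      field_simp
    rw [heq, div_le_div_iff₀ h2C hD0]
    linarith [key]
  linarith [step1, step2]

/-- Membership of `1/z` in the disk `|·-C| ≤ C` from a real-part bound on `z`. -/
lemma disk_of_re (C : ℝ) (hC : 0 < C) (z : ℂ) (hz : 1 / (2 * C) ≤ z.re) :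
    ‖1 / z - (C : ℂ)‖ ≤ C := by
  have hzre : 0 < z.re := lt_of_lt_of_le (by positivity) hz
  have hz0 : z ≠ 0 := fun h => by simp [h] at hzre
  have hns : 0 < Complex.normSq z := Complex.normSq_pos.2 hz0
  have h1 : 1 ≤ 2 * C * z.re := by
    rw [div_le_iff₀ (by positivity : (0:ℝ) < 2 * C)] at hz
    linarith [hz]
  have hkey : Complex.normSq (1 / z - (C : ℂ)) ≤ C ^ 2 := by
    have : (1 / z - (C : ℂ)) = (1 - (C : ℂ) * z) / z := by
      field_simp
    rw [this, Complex.normSq_div]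
    rw [div_le_iff₀ hns]
    have expand : Complex.normSq (1 - (C : ℂ) * z)
        = 1 - 2 * C * z.re + C ^ 2 * Complex.normSq z := by
      simp [Complex.normSq_apply, Complex.sub_re, Complex.sub_im, Complex.mul_re,
        Complex.mul_im, Complex.ofReal_re, Complex.ofReal_im]
      ring
    rw [expand]
    nlinarith [hns]
  have := Real.sqrt_le_sqrt hkey
  rwa [Complex.norm_def, Real.sqrt_sq hC.le] at *
  
theorem even_convergents_in_shifted_disk (b : ℕ → ℂ)
    (hb : ∀ n, 1 ≤ n → 0 < (b n).re)
    (M : ℝ)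
    (hM : ∀ n, 1 ≤ n → 1 / ((b (2 * n - 1)).re * (1 / b (2 * n)).re) ≤ M)
    (C : ℝ) (hC : 0 < C)
    (hC2 : M / 4 ≤ C ^ 2) :
    ∀ n : ℕ, ∀ w : ℂ, ‖w - (C : ℂ)‖ ≤ C →
      ‖contFrac (2 * n) b w (2 * n) - (C : ℂ)‖ ≤ C := by
  intro n w hw
  suffices h : ∀ k, k ≤ n → ‖contFrac (2 * n) b w (2 * k) - (C : ℂ)‖ ≤ C by
    exact h n le_rfl
  intro k
  induction k with
  | zero => intro _; simpa [contFrac] using hw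
  | succ k ih =>
    intro hk
    have hprev := ih (by omega)
    have hm : 1 ≤ n - k := by omega
    set m := n - k with hmdef
    have i1 : 2 * n - 2 * k = 2 * m := by omega
    have i2 : 2 * n - (2 * k + 1) = 2 * m - 1 := by omega
    have heq : contFrac (2 * n) b w (2 * (k + 1))
        = 1 / (b (2 * m - 1) + 1 / (b (2 * m) + contFrac (2 * n) b w (2 * k))) := by
      rw [show 2 * (k + 1) = (2 * k + 1) + 1 by ring, contFrac_succ, contFrac_succ, i1, i2]
    rw [heq]
    set u := contFrac (2 * n) b w (2 * k) with hudef
    set α := b (2 * m - 1) with hadef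
    set β := b (2 * m) with hbdef
    have hbα : 0 < α.re := hb _ (by omega)
    have hbβ : 0 < β.re := hb _ (by omega)
    have hβ0 : β ≠ 0 := fun h => by simp [h] at hbβ
    have hnsβ : 0 < Complex.normSq β := Complex.normSq_pos.2 hβ0
    have hrβ : (1 / β).re = β.re / Complex.normSq β := by
      rw [one_div, Complex.inv_re]
    have hrpos : 0 < (1 / β).re := by rw [hrβ]; positivity
    -- extract the inequality on real parts
    have hM4 : M ≤ 4 * C ^ 2 := by linarith
    have hMm := hM m hm
    have har : 0 < α.re * (1 / β).re := mul_pos hbα hrpos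
    have h1 : 1 ≤ 4 * C ^ 2 * (α.re * (1 / β).re) := by
      have := le_trans hMm hM4
      rw [div_le_iff₀ har] at this
      linarith
    have ha : β.re ^ 2 + β.im ^ 2 ≤ α.re * (4 * C ^ 2 * β.re) := by
      rw [hrβ] at h1
      have hns_eq : Complex.normSq β = β.re ^ 2 + β.im ^ 2 := by
        rw [Complex.normSq_apply]; ring
      rw [hns_eq] at h1 hnsβ
      have := mul_le_mul_of_nonneg_right h1 (le_of_lt hnsβ)
      calc β.re ^ 2 + β.im ^ 2 = 1 * (β.re ^ 2 + β.im ^ 2) := by ring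
        _ ≤ 4 * C ^ 2 * (α.re * (β.re / (β.re ^ 2 + β.im ^ 2))) * (β.re ^ 2 + β.im ^ 2) := this
        _ = α.re * (4 * C ^ 2 * β.re) := by field_simp
    -- disk condition on u
    have hu : u.re ^ 2 + u.im ^ 2 ≤ 2 * C * u.re := by
      have h2 : Complex.normSq (u - (C : ℂ)) ≤ C ^ 2 := by
        rw [← Complex.sq_norm]
        exact pow_le_pow_left₀ (norm_nonneg _) hprev 2
      rw [Complex.normSq_apply] at h2
      simp only [Complex.sub_re, Complex.sub_im, Complex.ofReal_re, Complex.ofReal_im] at h2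
      nlinarith [h2]
    -- real part bound for α + 1/(β+u)
    have hre : 1 / (2 * C) ≤ (α + 1 / (β + u)).re := by
      have hβu0 : β + u ≠ 0 := by
        intro h
        have : (β + u).re = 0 := by rw [h]; simp
        rw [Complex.add_re] at this
        have hure : 0 ≤ u.re := by nlinarith [sq_nonneg u.re, sq_nonneg u.im]
        linarith
      have hval : (1 / (β + u)).re
          = (β.re + u.re) / ((β.re + u.re) ^ 2 + (β.im + u.im) ^ 2) := by
        rw [one_div, Complex.inv_re, Complex.normSq_apply, Complex.add_re, Complex.add_im]
        congr 1
        ring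
      rw [Complex.add_re, hval]
      exact key_re C β.re β.im u.re u.im α.re hC hbβ hu ha
    exact disk_of_re C hC _ hre
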